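/- Let k and ℓ be positive integers and N = k·ℓ. The number of permutations σ of Fin N for which there exist i, j ∈ Fin k and a 3-element subset T of the block B_i with σ '' T ⊆ B_j is at most k² · (ℓ choose 3)² · 6 · (N − 3)!. -/

import Mathlib

open Finset Equiv

lemma cardFix {α : Type*} [Fintype α] [DecidableEq α] (T : Finset α) :
    ({σ : Equiv.Perm α | ∀ x ∈ T, σ x = x} : Finset _).card ≤ (Fintype.card α - T.card).factorial := by
  classical
  have key : ({σ : Equiv.Perm α | ∀ x ∈ T, σ x = x} : Finset _).card ≤
      (Finset.univ : Finset (Equiv.Perm {x : α // x ∉ T})).card := by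
    apply Finset.card_le_card_of_injOn
      (fun σ => if hσ : ∀ x ∈ T, σ x = x then
        σ.subtypePerm (fun x => by
          constructor
          · intro hc hx
            exact hc (by rw [hσ x hx]; exact hx)
          · intro hx hc
            have h2 : σ x = x := σ.injective (hσ (σ x) hc)
            exact hx (by rwa [h2] at hc)) else 1)
    · intro _ _; exact Finset.mem_coe.mpr (Finset.mem_univ _)
    · intro σ hσm τ hτm heq
      simp only [Finset.mem_coe, Finset.mem_filter, Finset.mem_univ, true_and] at hσm hτm
      simp only [dif_pos hσm, dif_pos hτm] at heq
      ext x
      by_cases hx : x ∈ T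
      · rw [hσm x hx, hτm x hx]
      · have := congrArg (fun f : Equiv.Perm {x : α // x ∉ T} => (f ⟨x, hx⟩ : α)) heq
        simpa [Equiv.Perm.subtypePerm] using this
  calc _ ≤ _ := key
    _ = (Fintype.card {x : α // x ∉ T}).factorial := by
        rw [Finset.card_univ, Fintype.card_perm]
    _ = (Fintype.card α - T.card).factorial := by
        congr 1
        rw [Fintype.card_subtype_compl, Fintype.card_coe]

lemma cardMapInto {α : Type*} [Fintype α] [DecidableEq α] (T S : Finset α) :
    ({σ : Equiv.Perm α | ∀ x ∈ T, σ x ∈ S} : Finset _).card ≤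
      S.card.descFactorial T.card * (Fintype.card α - T.card).factorial := by
  classical
  set A := ({σ : Equiv.Perm α | ∀ x ∈ T, σ x ∈ S} : Finset _) with hA
  set f : Equiv.Perm α → (T → α) := fun σ => fun t => σ t with hf
  have fiber : ∀ g ∈ A.image f, ({σ ∈ A | f σ = g} : Finset _).card ≤
      (Fintype.card α - T.card).factorial := by
    intro g hg
    rcases Finset.eq_empty_or_nonempty ({σ ∈ A | f σ = g} : Finset _) with he | ⟨σ₀, hσ₀⟩
    · simp [he]
    refine le_trans (Finset.card_le_card_of_injOn (fun σ => σ₀⁻¹ * σ) ?_ ?_) (cardFix T)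
    · intro σ hσ
      simp only [Finset.mem_coe, Finset.mem_filter] at hσ hσ₀ ⊢
      refine ⟨Finset.mem_univ _, ?_⟩
      intro x hx
      have : σ x = σ₀ x := by
        have h1 := congrFun hσ.2 ⟨x, hx⟩
        have h2 := congrFun hσ₀.2 ⟨x, hx⟩
        simp only [hf] at h1 h2; rw [h1, h2]
      simp [Equiv.Perm.mul_apply, this]
    · intro σ _ τ _ h
      exact mul_left_cancel h
  have h1 : A.card ≤ (Fintype.card α - T.card).factorial * (A.image f).card :=
    Finset.card_le_mul_card_image A _ fiber
  have h2 : (A.image f).card ≤ S.card.descFactorial T.card := by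
    have hsub : A.image f ⊆ ({g : T → α | Function.Injective g ∧ ∀ t, g t ∈ S} : Finset _) := by
      intro g hg
      simp only [Finset.mem_image] at hg
      obtain ⟨σ, hσ, rfl⟩ := hg
      simp only [Finset.mem_filter, Finset.mem_univ, true_and]
      simp only [hA, Finset.mem_filter, Finset.mem_univ, true_and] at hσ
      exact ⟨fun a b h => Subtype.ext (σ.injective h), fun t => hσ t t.2⟩
    refine le_trans (Finset.card_le_card hsub) ?_
    have heq : ({g : T → α | Function.Injective g ∧ ∀ t, g t ∈ S} : Finset _).card =
        Fintype.card {g : T → α // Function.Injective g ∧ ∀ t, g t ∈ S} := by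
      rw [Fintype.card_subtype]
    rw [heq]
    have hinj : Function.Injective
        (fun g : {g : T → α // Function.Injective g ∧ ∀ t, g t ∈ S} =>
          (⟨fun t => ⟨g.1 t, g.2.2 t⟩,
            fun a b hab => g.2.1 (by simpa using congrArg Subtype.val hab)⟩ : T ↪ S)) := by
      intro g g' h
      ext t
      have := congrArg (fun e : (T ↪ S) => (e t : α)) h
      exact this
    calc Fintype.card {g : T → α // Function.Injective g ∧ ∀ t, g t ∈ S}
        ≤ Fintype.card (T ↪ S) := Fintype.card_le_of_injective _ hinj
      _ = S.card.descFactorial T.card := by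
          rw [Fintype.card_embedding_eq, Fintype.card_coe, Fintype.card_coe]
  calc A.card ≤ _ := h1
    _ ≤ (Fintype.card α - T.card).factorial * (S.card.descFactorial T.card) :=
        Nat.mul_le_mul_left _ h2
    _ = _ := Nat.mul_comm _ _

lemma blockCard (k ℓ : ℕ) (i : Fin k) :
    ({x : Fin (k * ℓ) | (i : ℕ) * ℓ ≤ (x : ℕ) ∧ (x : ℕ) < ((i : ℕ) + 1) * ℓ} : Finset _).card
      = ℓ := by
  classical
  conv_rhs => rw [← Finset.card_range ℓ]
  refine Finset.card_bij' (fun x _ => (x : ℕ) - (i : ℕ) * ℓ)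
    (fun t ht => ⟨(i : ℕ) * ℓ + t, ?_⟩) ?_ ?_ ?_ ?_
  · have hi : (i : ℕ) + 1 ≤ k := i.2
    have ht' : t < ℓ := Finset.mem_range.mp ht
    calc (i : ℕ) * ℓ + t < ((i : ℕ) + 1) * ℓ := by nlinarith
      _ ≤ k * ℓ := Nat.mul_le_mul_right ℓ hi
  · intro x hx
    simp only [Finset.mem_filter, Finset.mem_univ, true_and] at hx
    rw [add_mul, one_mul] at hx
    simp only [Finset.mem_range]
    omega
  · intro t ht
    have ht' : t < ℓ := Finset.mem_range.mp ht
    simp only [Finset.mem_filter, Finset.mem_univ, true_and]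
    refine ⟨Nat.le_add_right _ _, ?_⟩
    show (i : ℕ) * ℓ + t < ((i : ℕ) + 1) * ℓ
    rw [add_mul, one_mul]
    omega
  · intro x hx
    simp only [Finset.mem_filter, Finset.mem_univ, true_and] at hx
    rw [add_mul, one_mul] at hx
    ext
    show (i : ℕ) * ℓ + ((x : ℕ) - (i : ℕ) * ℓ) = (x : ℕ)
    omega
  · intro t ht
    show (i : ℕ) * ℓ + t - (i : ℕ) * ℓ = t
    omega

/-- The number of "bad" permutations of `Fin (k·ℓ)` — those mapping some 3-element subset of a
block `B_i = {x | i·ℓ ≤ x < (i+1)·ℓ}` into a block `B_j` — is at most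
`k² · (ℓ choose 3)² · 6 · (k·ℓ − 3)!`. -/
theorem stmt5 (k ℓ : ℕ) (hk : 0 < k) (hℓ : 0 < ℓ) :
    Nat.card {σ : Equiv.Perm (Fin (k * ℓ)) //
        ∃ i j : Fin k, ∃ T : Finset (Fin (k * ℓ)), T.card = 3 ∧
          (∀ x ∈ T, (i : ℕ) * ℓ ≤ (x : ℕ) ∧ (x : ℕ) < ((i : ℕ) + 1) * ℓ) ∧
          (∀ x ∈ T, (j : ℕ) * ℓ ≤ (σ x : ℕ) ∧ (σ x : ℕ) < ((j : ℕ) + 1) * ℓ)} ≤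
      k ^ 2 * (ℓ.choose 3) ^ 2 * 6 * (k * ℓ - 3).factorial := by
  classical
  rw [Nat.card_eq_fintype_card, Fintype.card_subtype]
  set B : Fin k → Finset (Fin (k * ℓ)) :=
    fun j => ({x : Fin (k * ℓ) | (j : ℕ) * ℓ ≤ (x : ℕ) ∧ (x : ℕ) < ((j : ℕ) + 1) * ℓ} :
      Finset _) with hB
  set bigset : Finset (Equiv.Perm (Fin (k * ℓ))) :=
    (Finset.univ ×ˢ Finset.univ : Finset (Fin k × Fin k)).biUnion
      (fun p => (Finset.powersetCard 3 (B p.1)).biUnion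
        (fun T => {σ : Equiv.Perm (Fin (k * ℓ)) | ∀ x ∈ T, σ x ∈ B p.2})) with hbig
  have hsub : ∀ σ ∈ ({σ : Equiv.Perm (Fin (k * ℓ)) |
        ∃ i j : Fin k, ∃ T : Finset (Fin (k * ℓ)), T.card = 3 ∧
          (∀ x ∈ T, (i : ℕ) * ℓ ≤ (x : ℕ) ∧ (x : ℕ) < ((i : ℕ) + 1) * ℓ) ∧
          (∀ x ∈ T, (j : ℕ) * ℓ ≤ (σ x : ℕ) ∧ (σ x : ℕ) < ((j : ℕ) + 1) * ℓ)} : Finset _),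
      σ ∈ bigset := by
    intro σ hσ
    obtain ⟨i, j, T, h3, hTi, hTj⟩ := (Finset.mem_filter.mp hσ).2
    refine Finset.mem_biUnion.mpr ⟨(i, j), Finset.mem_product.mpr
      ⟨Finset.mem_univ _, Finset.mem_univ _⟩, Finset.mem_biUnion.mpr ⟨T, ?_, ?_⟩⟩
    · exact Finset.mem_powersetCard.mpr
        ⟨fun x hx => Finset.mem_filter.mpr ⟨Finset.mem_univ _, hTi x hx⟩, h3⟩
    · exact Finset.mem_filter.mpr ⟨Finset.mem_univ _, fun x hx =>
        Finset.mem_filter.mpr ⟨Finset.mem_univ _, hTj x hx⟩⟩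
  refine le_trans (Finset.card_le_card hsub) ?_
  refine le_trans Finset.card_biUnion_le ?_
  refine le_trans (Finset.sum_le_sum (fun p _ => Finset.card_biUnion_le)) ?_
  have inner : ∀ p : Fin k × Fin k, ∀ T ∈ Finset.powersetCard 3 (B p.1),
      ({σ : Equiv.Perm (Fin (k * ℓ)) | ∀ x ∈ T, σ x ∈ B p.2} : Finset _).card ≤
        ℓ.descFactorial 3 * (k * ℓ - 3).factorial := by
    intro p T hT
    have h3 : T.card = 3 := (Finset.mem_powersetCard.mp hT).2
    have := cardMapInto T (B p.2)
    rw [h3, Fintype.card_fin, blockCard] at this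
    convert this using 2
    congr!
  refine le_trans (Finset.sum_le_sum (fun p hp => Finset.sum_le_sum (inner p))) ?_
  have hsum : ∑ p ∈ (Finset.univ ×ˢ Finset.univ : Finset (Fin k × Fin k)),
      ∑ _T ∈ Finset.powersetCard 3 (B p.1), ℓ.descFactorial 3 * (k * ℓ - 3).factorial
      = k ^ 2 * (ℓ.choose 3 * (ℓ.descFactorial 3 * (k * ℓ - 3).factorial)) := by
    simp only [hB, Finset.card_powersetCard, blockCard, Finset.sum_const, smul_eq_mul,
      Finset.card_product, Finset.card_univ, Fintype.card_fin]
    ring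
  rw [hsum, Nat.descFactorial_eq_factorial_mul_choose]
  have : (3 : ℕ).factorial = 6 := rfl
  rw [this]
  apply le_of_eq
  ring
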